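/- For all integers n > r ≥ 1, ∑_{k=1}^{n−r} ∑_{(u_1,…,u_k)} r^{u_1} u_1^{u_2} ⋯ u_{k−1}^{u_k} · (n−r)!/(u_1! u_2! ⋯ u_k!) = r · n^{n−r−1}, where the inner sum is over all k-tuples of strictly positive integers (u_1,…,u_k) with u_1+⋯+u_k = n−r. -/

import Mathlib

/-- The compositions of `m` into `k` strictly positive parts `(u_1, …, u_k)`
(as functions `Fin k → ℕ`, `u i` being `u_{i+1}`). -/
def compositions (k m : ℕ) : Finset (Fin k → ℕ) :=
  (Finset.Nat.antidiagonalTuple k m).filter fun u => ∀ i, 1 ≤ u i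

/-- The chain `r^{u_1} u_1^{u_2} ⋯ u_{k−1}^{u_k}`. -/
def chainN (r k : ℕ) (u : Fin k → ℕ) : ℕ :=
  ∏ i : Fin k,
    (if (i : ℕ) = 0 then r
      else u ⟨(i : ℕ) - 1, lt_of_le_of_lt (Nat.sub_le _ _) i.isLt⟩) ^ u i

namespace ForestAux

lemma mem_compositions {k m : ℕ} {u : Fin k → ℕ} :
    u ∈ compositions k m ↔ (∑ i, u i) = m ∧ ∀ i, 1 ≤ u i := by
  simp [compositions, Finset.Nat.mem_antidiagonalTuple]

lemma compositions_empty {k m : ℕ} (h : m < k) : compositions k m = ∅ := by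
  ext u
  simp only [mem_compositions, Finset.notMem_empty, iff_false, not_and]
  intro hs hpos
  have hk : k ≤ m := by
    calc k = ∑ _i : Fin k, 1 := by simp
    _ ≤ ∑ i, u i := Finset.sum_le_sum fun i _ => hpos i
    _ = m := hs
  omega

lemma chainN_cons (a u1 : ℕ) {k : ℕ} (v : Fin k → ℕ) :
    chainN a (k + 1) (Fin.cons u1 v) = a ^ u1 * chainN u1 k v := by
  unfold chainN
  rw [Fin.prod_univ_succ]
  congr 1
  refine Finset.prod_congr rfl fun x _ => ?_
  rcases x with ⟨iv, hi⟩
  have he : ∀ (m : ℕ) (h : m + 1 < k + 1) (h' : m < k),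
      (Fin.cons u1 v : Fin (k + 1) → ℕ) ⟨m + 1, h⟩ = v ⟨m, h'⟩ := fun m h h' => by
    rw [show (⟨m + 1, h⟩ : Fin (k + 1)) = Fin.succ ⟨m, h'⟩ from rfl, Fin.cons_succ]
  cases iv with
  | zero =>
    simp only [Fin.succ_mk, Fin.val_mk, he 0 (by omega) hi, Fin.mk_zero, Fin.cons_zero]
    norm_num
  | succ j =>
    simp only [Fin.succ_mk, Fin.val_mk, he (j + 1) (by omega) hi]
    have h1 : (⟨j + 1 + 1 - 1, by omega⟩ : Fin (k + 1)) = (⟨j, by omega⟩ : Fin k).succ := rfl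
    rw [h1, Fin.cons_succ]
    norm_num

lemma multinomial_map {α β : Type*} (e : α ↪ β) (s : Finset α) (f : β → ℕ) :
    Nat.multinomial (s.map e) f = Nat.multinomial s (f ∘ e) := by
  unfold Nat.multinomial
  rw [Finset.sum_map, Finset.prod_map]
  rfl

lemma multinomial_cons_fin {k : ℕ} (u1 : ℕ) (v : Fin k → ℕ) :
    Nat.multinomial Finset.univ (Fin.cons u1 v : Fin (k + 1) → ℕ) =
      (u1 + ∑ i, v i).choose u1 * Nat.multinomial Finset.univ v := by
  rw [Fin.univ_succ, Nat.multinomial_cons, multinomial_map]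
  simp only [Fin.cons_zero, Finset.sum_map, Function.Embedding.coeFn_mk, Fin.cons_succ]
  congr 1

lemma sum_compositions_succ {k m : ℕ} (F : (Fin (k + 1) → ℕ) → ℕ) :
    ∑ u ∈ compositions (k + 1) m, F u =
      ∑ c ∈ Finset.Icc 1 m, ∑ v ∈ compositions k (m - c), F (Fin.cons c v) := by
  rw [Finset.sum_sigma' (Finset.Icc 1 m) (fun c => compositions k (m - c))
    (fun c v => F (Fin.cons c v))]
  symm
  refine Finset.sum_bij' (fun p _ => Fin.cons p.1 p.2)
    (fun u _ => ⟨u 0, Fin.tail u⟩) ?_ ?_ ?_ ?_ ?_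
  · rintro ⟨c, v⟩ hp
    simp only [Finset.mem_sigma, Finset.mem_Icc, mem_compositions] at hp
    obtain ⟨⟨hc1, hcm⟩, hv, hvpos⟩ := hp
    dsimp only
    rw [mem_compositions]
    constructor
    · rw [Fin.sum_cons, hv]
      omega
    · intro i
      refine Fin.cases ?_ ?_ i
      · simpa using hc1
      · intro j; simpa using hvpos j
  · intro u hu
    rw [mem_compositions] at hu
    obtain ⟨hs, hpos⟩ := hu
    have h0 : u 0 ≤ m := by
      rw [← hs]
      exact Finset.single_le_sum (fun i _ => Nat.zero_le _) (Finset.mem_univ 0)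
    simp only [Finset.mem_sigma, Finset.mem_Icc, mem_compositions]
    refine ⟨⟨hpos 0, h0⟩, ?_, fun j => hpos j.succ⟩
    have h2 := Fin.sum_univ_succ u
    have ht : ∑ i : Fin k, Fin.tail u i = ∑ i : Fin k, u i.succ := rfl
    omega
  · rintro ⟨c, v⟩ _
    simp [Fin.tail_cons]
  · intro u _
    exact Fin.cons_self_tail u
  · rintro ⟨c, v⟩ _
    rfl

/-- Inner sum. -/
def T (a k m : ℕ) : ℕ :=
  ∑ u ∈ compositions k m, chainN a k u * Nat.multinomial Finset.univ u

/-- Full sum. -/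
def S (a m : ℕ) : ℕ := ∑ k ∈ Finset.Icc 1 m, T a k m

lemma T_one (a m : ℕ) (hm : 1 ≤ m) : T a 1 m = a ^ m := by
  unfold T
  have h1 : compositions 1 m = {![m]} := by
    unfold compositions
    rw [Finset.Nat.antidiagonalTuple_one, Finset.filter_singleton, if_pos]
    intro i
    fin_cases i
    simpa using hm
  rw [h1, Finset.sum_singleton]
  have h2 : chainN a 1 ![m] = a ^ m := by
    unfold chainN
    rw [Fin.prod_univ_one]
    norm_num
  have h3 : Nat.multinomial Finset.univ ![m] = 1 := by
    have h : (Finset.univ : Finset (Fin 1)) = {0} := rfl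
    rw [h, Nat.multinomial_singleton]
  rw [h2, h3, mul_one]

lemma T_zero (a k m : ℕ) (h : m < k) : T a k m = 0 := by
  unfold T
  rw [compositions_empty h, Finset.sum_empty]

lemma T_succ (a k m : ℕ) :
    T a (k + 1) m =
      ∑ c ∈ Finset.Icc 1 m, m.choose c * a ^ c * T c k (m - c) := by
  unfold T
  rw [sum_compositions_succ]
  refine Finset.sum_congr rfl fun c hc => ?_
  rw [Finset.mem_Icc] at hc
  rw [Finset.mul_sum]
  refine Finset.sum_congr rfl fun v hv => ?_
  rw [mem_compositions] at hv
  rw [chainN_cons, multinomial_cons_fin, hv.1]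
  rw [show c + (m - c) = m by omega]
  ring

lemma sum_Icc_one {M : Type*} [AddCommMonoid M] (m : ℕ) (f : ℕ → M) :
    ∑ k ∈ Finset.Icc 1 m, f k = ∑ i ∈ Finset.range m, f (i + 1) := by
  rw [← Finset.Ico_add_one_right_eq_Icc, Finset.sum_Ico_eq_sum_range]
  refine Finset.sum_congr (by norm_num) fun i _ => by rw [add_comm]

lemma S_rec (a m : ℕ) (hm : 1 ≤ m) :
    S a m = ∑ c ∈ Finset.Icc 1 m,
      m.choose c * a ^ c * (if m - c = 0 then 1 else S c (m - c)) := by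
  obtain ⟨m', rfl⟩ : ∃ m', m = m' + 1 := ⟨m - 1, by omega⟩
  rw [show S a (m' + 1) = ∑ k ∈ Finset.Icc 1 (m' + 1), T a k (m' + 1) from rfl]
  rw [sum_Icc_one, Finset.sum_range_succ']
  have hTone : T a (0 + 1) (m' + 1) = a ^ (m' + 1) := T_one a (m' + 1) (by omega)
  have hmain : ∑ i ∈ Finset.range m', T a (i + 1 + 1) (m' + 1) =
      ∑ c ∈ Finset.Icc 1 m', (m' + 1).choose c * a ^ c * S c (m' + 1 - c) := by
    rw [Finset.sum_congr rfl fun i _ => T_succ a (i + 1) (m' + 1)]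
    rw [Finset.sum_comm]
    rw [Finset.sum_Icc_succ_top (by omega : (1:ℕ) ≤ m' + 1)]
    have hz : ∑ i ∈ Finset.range m',
        (m' + 1).choose (m' + 1) * a ^ (m' + 1) * T (m' + 1) (i + 1) (m' + 1 - (m' + 1)) = 0 := by
      refine Finset.sum_eq_zero fun i _ => ?_
      rw [show m' + 1 - (m' + 1) = 0 by omega, T_zero _ _ _ (by omega), mul_zero]
    rw [hz, add_zero]
    refine Finset.sum_congr rfl fun c hc => ?_
    rw [Finset.mem_Icc] at hc
    rw [← Finset.mul_sum]
    congr 1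
    rw [show S c (m' + 1 - c) = ∑ k ∈ Finset.Icc 1 (m' + 1 - c), T c k (m' + 1 - c) from rfl]
    rw [sum_Icc_one]
    have hsub : Finset.range (m' + 1 - c) ⊆ Finset.range m' :=
      Finset.range_subset_range.mpr (by omega)
    refine (Finset.sum_subset hsub fun i _ hi => ?_).symm
    rw [Finset.mem_range] at hi
    exact T_zero _ _ _ (by omega)
  rw [hmain, hTone]
  rw [Finset.sum_Icc_succ_top (by omega : (1:ℕ) ≤ m' + 1)]
  rw [show ((m' + 1).choose (m' + 1) * a ^ (m' + 1) *
      if m' + 1 - (m' + 1) = 0 then 1 else S (m' + 1) (m' + 1 - (m' + 1))) = a ^ (m' + 1) by simp]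
  congr 1
  refine Finset.sum_congr rfl fun c hc => ?_
  rw [Finset.mem_Icc] at hc
  rw [if_neg (by omega)]

lemma abel_identity (a m : ℕ) (hm : 1 ≤ m) :
    ∑ c ∈ Finset.Icc 1 m,
        m.choose c * a ^ c * (if m - c = 0 then 1 else c * (c + (m - c)) ^ (m - c - 1)) =
      a * (a + m) ^ (m - 1) := by
  refine Nat.eq_of_mul_eq_mul_left (show 0 < m by omega) ?_
  rw [Finset.mul_sum, sum_Icc_one]
  have hrhs : m * (a * (a + m) ^ (m - 1)) =
      ∑ j ∈ Finset.range m, (m - 1).choose j * a ^ (j + 1) * m ^ (m - j) := by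
    rw [add_pow]
    simp only [Nat.cast_id]
    rw [show m - 1 + 1 = m by omega, Finset.mul_sum, Finset.mul_sum]
    refine Finset.sum_congr rfl fun j hj => ?_
    rw [Finset.mem_range] at hj
    rw [show m ^ (m - j) = m * m ^ (m - 1 - j) by
      rw [← pow_succ']
      congr 1
      omega]
    rw [pow_succ]
    ring
  rw [hrhs]
  refine Finset.sum_congr rfl fun j hj => ?_
  rw [Finset.mem_range] at hj
  by_cases hcm : j + 1 = m
  · rw [if_pos (by omega)]
    rw [hcm, Nat.choose_self, show m - j = 1 by omega, show m - 1 = j by omega,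
      Nat.choose_self, pow_one]
    ring
  · rw [if_neg (by omega)]
    have h := Nat.add_one_mul_choose_eq (m - 1) j
    rw [show m - 1 + 1 = m by omega] at h
    rw [show j + 1 + (m - (j + 1)) = m by omega, show m - (j + 1) - 1 = m - j - 2 by omega,
      show m ^ (m - j) = m ^ (m - j - 2) * (m * m) by
        conv_lhs => rw [show m - j = m - j - 2 + 2 by omega]
        rw [pow_add]; ring]
    calc m * (m.choose (j + 1) * a ^ (j + 1) * ((j + 1) * m ^ (m - j - 2)))
        = m.choose (j + 1) * (j + 1) * a ^ (j + 1) * m ^ (m - j - 2) * m := by ring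
      _ = m * (m - 1).choose j * a ^ (j + 1) * m ^ (m - j - 2) * m := by rw [← h]
      _ = (m - 1).choose j * a ^ (j + 1) * (m ^ (m - j - 2) * (m * m)) := by ring

lemma S_eq (a m : ℕ) (hm : 1 ≤ m) : S a m = a * (a + m) ^ (m - 1) := by
  induction m using Nat.strong_induction_on generalizing a with
  | _ m IH =>
    rw [S_rec a m hm]
    rw [← abel_identity a m hm]
    refine Finset.sum_congr rfl fun c hc => ?_
    rw [Finset.mem_Icc] at hc
    by_cases h0 : m - c = 0
    · rw [if_pos h0, if_pos h0]
    · rw [if_neg h0, if_neg h0, IH (m - c) (by omega) c (by omega)]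

end ForestAux

/-- for `n > r ≥ 1`,
`∑_{k=1}^{n−r} ∑_{(u_1,…,u_k)} r^{u_1} u_1^{u_2} ⋯ u_{k−1}^{u_k} (n−r)!/(u_1!⋯u_k!) = r n^{n−r−1}`,
the inner sum being over the compositions of `n − r` into `k` strictly positive parts. -/
theorem sum_chain_multinomial_eq_forest_count (n r : ℕ) (hr : 1 ≤ r) (hrn : r + 1 ≤ n) :
    ∑ k ∈ Finset.Icc 1 (n - r), ∑ u ∈ compositions k (n - r),
        chainN r k u * Nat.multinomial Finset.univ u =
      r * n ^ (n - r - 1) := by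
  have h1 : (1:ℕ) ≤ n - r := by omega
  have h := ForestAux.S_eq r (n - r) h1
  unfold ForestAux.S ForestAux.T at h
  rw [h, show r + (n - r) = n by omega]
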